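/- Let d ≥ 1 and let μ be a probability mass function on ℤ^d. Suppose there exist constants C₁, C₂ > 0 such that the n-fold convolution powers of μ satisfy μ^{*n}(y) ≤ C₁ n^{-d/2} exp(−C₂|y|²/n) for every integer n ≥ 1 and every y ∈ ℤ^d. Then there exist constants κ₁, κ₂ > 0, depending only on d, C₁, C₂, such that for every real t ≥ 1/2 and every y ∈ ℤ^d one has q_t(y) ≤ κ₁ t^{-d/2} exp(−κ₂|y|/√t). -/
import Mathlib


open MeasureTheory

/-- Euclidean norm of a lattice point `y ∈ ℤ^d`. -/
noncomputable def znorm {d : ℕ} (y : Fin d → ℤ) : ℝ :=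
  Real.sqrt (∑ i, ((y i : ℝ)) ^ 2)

/-- `n`-fold convolution power of a pmf `μ` on `ℤ^d`
(with `μ^{*0}` the point mass at `0`). -/
noncomputable def convPow {d : ℕ} (μ : (Fin d → ℤ) → ℝ) : ℕ → (Fin d → ℤ) → ℝ
  | 0 => fun y => if y = 0 then 1 else 0
  | n + 1 => fun y => ∑' z : Fin d → ℤ, convPow μ n z * μ (y - z)

/-- Continuous-time transition kernel `q_t(y) = Σ_n e^{-t} t^n/n! μ^{*n}(y)`. -/
noncomputable def qKer {d : ℕ} (μ : (Fin d → ℤ) → ℝ) (t : ℝ) (y : Fin d → ℤ) : ℝ :=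
  ∑' n : ℕ, Real.exp (-t) * t ^ n / (Nat.factorial n) * convPow μ n y

lemma tsum_pow_div_factorial' (x : ℝ) : ∑' n : ℕ, x ^ n / (Nat.factorial n : ℝ) = Real.exp x := by
  rw [Real.exp_eq_exp_ℝ, NormedSpace.exp_eq_tsum_div]

lemma convPow_nonneg {d : ℕ} (μ : (Fin d → ℤ) → ℝ) (hμ0 : ∀ y, 0 ≤ μ y) :
    ∀ n y, 0 ≤ convPow μ n y := by
  intro n
  induction n with
  | zero =>
    intro y
    simp only [convPow]
    positivity
  | succ m ih =>
    intro y
    simp only [convPow]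
    exact tsum_nonneg fun z => mul_nonneg (ih z) (hμ0 _)

set_option maxHeartbeats 1000000 in
theorem stmt0 (d : ℕ) (hd : 1 ≤ d) (μ : (Fin d → ℤ) → ℝ)
    (hμ0 : ∀ y, 0 ≤ μ y) (hμ1 : ∑' y : Fin d → ℤ, μ y = 1)
    (C₁ C₂ : ℝ) (hC₁ : 0 < C₁) (hC₂ : 0 < C₂)
    (hbound : ∀ n : ℕ, 1 ≤ n → ∀ y : Fin d → ℤ,
      convPow μ n y ≤ C₁ * (n : ℝ) ^ (-(d : ℝ) / 2) * Real.exp (-C₂ * (znorm y) ^ 2 / n)) :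
    ∃ κ₁ > 0, ∃ κ₂ > 0, ∀ t : ℝ, 1 / 2 ≤ t → ∀ y : Fin d → ℤ,
      qKer μ t y ≤ κ₁ * t ^ (-(d : ℝ) / 2) * Real.exp (-κ₂ * znorm y / Real.sqrt t) := by
  set κ₂ : ℝ := min (C₂ / 3) (Real.sqrt C₂) with hκ₂def
  have hκ₂pos : 0 < κ₂ := lt_min (by linarith) (Real.sqrt_pos.mpr hC₂)
  clear_value κ₂
  set M : ℝ := (Nat.factorial d : ℝ) * 7 ^ d * 2 ^ d with hMdef
  have hM1 : (1:ℝ) ≤ M := by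
    have h1 : (1:ℝ) ≤ (Nat.factorial d : ℝ) := by exact_mod_cast d.factorial_pos
    have h2 : (1:ℝ) ≤ 7 ^ d := one_le_pow₀ (by norm_num)
    have h3 : (1:ℝ) ≤ 2 ^ d := one_le_pow₀ (by norm_num)
    have h4 : (1:ℝ)*1 ≤ (Nat.factorial d : ℝ) * 7 ^ d :=
      mul_le_mul h1 h2 (by norm_num) (by linarith)
    have h5 : (1:ℝ)*1 ≤ ((Nat.factorial d : ℝ) * 7 ^ d) * 2 ^ d :=
      mul_le_mul (by linarith) h3 (by norm_num) (by linarith)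
    rw [hMdef]; linarith
  have hM0 : (0:ℝ) < M := by linarith
  clear_value M
  refine ⟨M + C₁ * Real.exp C₂ * (2:ℝ) ^ ((d:ℝ)/2) + C₁ * Real.exp C₂ * M + 2 * C₁ * M,
    by positivity, κ₂, hκ₂pos, ?_⟩
  intro t ht y
  have ht0 : (0:ℝ) < t := by linarith
  set r : ℝ := znorm y with hrdef
  have hr0 : 0 ≤ r := by rw [hrdef]; exact Real.sqrt_nonneg _
  set E : ℝ := Real.exp (-κ₂ * r / Real.sqrt t) with hEdef
  have hE0 : 0 < E := by rw [hEdef]; exact Real.exp_pos _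
  set T : ℝ := t ^ (-(d:ℝ)/2) with hTdef
  have hT0 : 0 < T := by rw [hTdef]; exact Real.rpow_pos_of_pos ht0 _
  clear_value T
  have hst0 : 0 < Real.sqrt t := Real.sqrt_pos.mpr ht0
  have hsthalf : (1:ℝ)/2 ≤ Real.sqrt t := by
    rw [show (1:ℝ)/2 = Real.sqrt ((1:ℝ)/4) by
      rw [show (1:ℝ)/4 = (1/2)^2 by norm_num, Real.sqrt_sq (by norm_num)]]
    exact Real.sqrt_le_sqrt (by linarith)
  -- (F1)
  have hF1 : Real.exp (-(t/7)) ≤ M * T := by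
    have hTt : T * t ^ ((d:ℝ)/2) = 1 := by
      rw [hTdef, ← Real.rpow_add ht0,
        show (-(d:ℝ)/2 + (d:ℝ)/2) = 0 by ring, Real.rpow_zero]
    have h1 : t ^ ((d:ℝ)/2) ≤ M * Real.exp (t/7) := by
      rcases le_or_gt t 1 with h | h
      · have ha : t ^ ((d:ℝ)/2) ≤ 1 := Real.rpow_le_one ht0.le h (by positivity)
        have hb : (1:ℝ) ≤ Real.exp (t/7) := Real.one_le_exp (by linarith)
        nlinarith
      · have h2 : t ^ ((d:ℝ)/2) ≤ t ^ ((d:ℝ)) := by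
          apply Real.rpow_le_rpow_of_exponent_le h.le
          have : (0:ℝ) ≤ (d:ℝ) := Nat.cast_nonneg d
          linarith
        rw [Real.rpow_natCast] at h2
        have h3 : (t/7)^d / (Nat.factorial d : ℝ) ≤ Real.exp (t/7) :=
          Real.pow_div_factorial_le_exp (x := t/7) (by positivity) d
        have hfac : (0:ℝ) < (Nat.factorial d : ℝ) := by exact_mod_cast d.factorial_pos
        have h5 : (t/7)^d ≤ (Nat.factorial d : ℝ) * Real.exp (t/7) := by
          rw [div_le_iff₀ hfac] at h3
          linarith [h3]
        have h4 : t ^ d = 7^d * (t/7)^d := by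
          rw [div_pow]
          field_simp
        have h6 : (1:ℝ) ≤ 2 ^ d := one_le_pow₀ (by norm_num)
        have h7 : (0:ℝ) < (7:ℝ)^d := by positivity
        calc t ^ ((d:ℝ)/2) ≤ t ^ d := h2
          _ = 7^d * (t/7)^d := h4
          _ ≤ 7^d * ((Nat.factorial d : ℝ) * Real.exp (t/7)) := by
              apply mul_le_mul_of_nonneg_left h5 h7.le
          _ ≤ M * Real.exp (t/7) := by
              rw [hMdef]
              nlinarith [mul_nonneg (mul_nonneg (mul_nonneg hfac.le h7.le)
                (Real.exp_pos (t/7)).le) (by linarith : (0:ℝ) ≤ 2^d - 1)]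
    have hexp1 : Real.exp (-(t/7)) * Real.exp (t/7) = 1 := by rw [← Real.exp_add]; simp
    have h8 : Real.exp (-(t/7)) * t ^ ((d:ℝ)/2) ≤ M := by
      calc Real.exp (-(t/7)) * t ^ ((d:ℝ)/2)
          ≤ Real.exp (-(t/7)) * (M * Real.exp (t/7)) :=
            mul_le_mul_of_nonneg_left h1 (Real.exp_pos _).le
        _ = M * (Real.exp (-(t/7)) * Real.exp (t/7)) := by ring
        _ = M := by rw [hexp1]; ring
    calc Real.exp (-(t/7)) = Real.exp (-(t/7)) * (T * t ^ ((d:ℝ)/2)) := by rw [hTt]; ring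
      _ = (Real.exp (-(t/7)) * t ^ ((d:ℝ)/2)) * T := by ring
      _ ≤ M * T := mul_le_mul_of_nonneg_right h8 hT0.le
  have hexpt7 : Real.exp (-t) ≤ Real.exp (-(t/7)) := Real.exp_le_exp.mpr (by linarith)
  have hexptMT : Real.exp (-t) ≤ M * T := hexpt7.trans hF1
  -- (F3) Chernoff
  have hCher : Real.exp (-t) * (2:ℝ) ^ (t/2) * Real.exp (t/2) ≤ Real.exp (-(t/7)) := by
    have h2t : (2:ℝ) ^ (t/2) = Real.exp (Real.log 2 * (t/2)) := by
      rw [Real.rpow_def_of_pos (by norm_num)]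
    rw [h2t, ← Real.exp_add, ← Real.exp_add]
    apply Real.exp_le_exp.mpr
    nlinarith [Real.log_two_lt_d9, Real.log_pos (by norm_num : (1:ℝ) < 2), ht0]
  -- (F4)
  have hF4 : Real.exp (-(2*Real.sqrt C₂) * r) ≤ E := by
    rw [hEdef]
    apply Real.exp_le_exp.mpr
    have hκ₂sq : κ₂ ≤ Real.sqrt C₂ := by rw [hκ₂def]; exact min_le_right _ _
    have h1 : κ₂ * r / Real.sqrt t ≤ 2*κ₂*r := by
      rw [div_le_iff₀ hst0]
      nlinarith [mul_nonneg (mul_nonneg hκ₂pos.le hr0)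
        (by linarith : (0:ℝ) ≤ 2*Real.sqrt t - 1)]
    have h2 : 2*κ₂*r ≤ 2*Real.sqrt C₂*r := by
      nlinarith [mul_nonneg (sub_nonneg.mpr hκ₂sq) hr0]
    have hneg : -κ₂ * r / Real.sqrt t = -(κ₂ * r / Real.sqrt t) := by ring
    rw [hneg]
    linarith [h1, h2]
  -- (F5) gaussian-to-exponential on n ≤ 21 t
  have hgauss : ∀ n : ℕ, 1 ≤ n → (n:ℝ) ≤ 21*t →
      Real.exp (-C₂ * r^2 / n) ≤ Real.exp C₂ * E := by
    intro n hn h21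
    have hn0 : (0:ℝ) < (n:ℝ) := by exact_mod_cast hn
    set s : ℝ := Real.sqrt n with hsdef
    have hs0 : 0 < s := Real.sqrt_pos.mpr hn0
    have hs2 : s^2 = (n:ℝ) := Real.sq_sqrt hn0.le
    have hs5 : s ≤ 5 * Real.sqrt t := by
      have h1 : s ≤ Real.sqrt (25*t) := Real.sqrt_le_sqrt (by linarith)
      have h2 : Real.sqrt (25*t) = 5 * Real.sqrt t := by
        rw [show (25:ℝ)*t = 5^2 * t by norm_num, Real.sqrt_mul (by positivity) t,
          Real.sqrt_sq (by norm_num)]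
      linarith [h1, h2.le]
    have hstep1 : -C₂ * r^2 / n ≤ C₂ + (-(2*C₂) * r / s) := by
      have hu : r^2/(n:ℝ) = (r/s)^2 := by rw [div_pow, hs2]
      have h : -C₂ * r^2/(n:ℝ) = -C₂ * (r/s)^2 := by
        rw [mul_div_assoc, hu]
      rw [h]
      have h2 : -(2*C₂) * r / s = -(2*C₂) * (r/s) := by ring
      rw [h2]
      nlinarith [sq_nonneg (1 - r/s), hC₂]
    have hstep2 : -(2*C₂) * r / s ≤ -κ₂ * r / Real.sqrt t := by
      rw [neg_mul, neg_mul, neg_div, neg_div, neg_le_neg_iff]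
      rw [div_le_div_iff₀ hst0 hs0]
      have hκ₂3 : κ₂ ≤ C₂ / 3 := by rw [hκ₂def]; exact min_le_left _ _
      have : κ₂ * s ≤ (C₂/3) * (5 * Real.sqrt t) := by
        apply mul_le_mul hκ₂3 hs5 hs0.le (by linarith)
      nlinarith [mul_nonneg hr0 hst0.le, mul_nonneg hr0 hs0.le, mul_nonneg hC₂.le hr0]
    calc Real.exp (-C₂ * r^2 / n) ≤ Real.exp (C₂ + (-κ₂ * r / Real.sqrt t)) := by
          apply Real.exp_le_exp.mpr; linarith
      _ = Real.exp C₂ * E := by rw [Real.exp_add, hEdef]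
  -- rpow facts
  have hrpone : ∀ n : ℕ, 1 ≤ n → ((n:ℝ)) ^ (-(d:ℝ)/2) ≤ 1 := by
    intro n hn
    apply Real.rpow_le_one_of_one_le_of_nonpos (by exact_mod_cast hn)
    have : (0:ℝ) ≤ (d:ℝ) := Nat.cast_nonneg d
    linarith
  have hrpmid : ∀ n : ℕ, t/2 ≤ (n:ℝ) → ((n:ℝ)) ^ (-(d:ℝ)/2) ≤ (2:ℝ)^((d:ℝ)/2) * T := by
    intro n hmid
    have h1 : ((n:ℝ)) ^ (-(d:ℝ)/2) ≤ (t/2) ^ (-(d:ℝ)/2) := by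
      apply Real.rpow_le_rpow_of_nonpos (by positivity) hmid
      have : (0:ℝ) ≤ (d:ℝ) := Nat.cast_nonneg d
      linarith
    have h2 : ((t:ℝ)/2) ^ (-(d:ℝ)/2) = (2:ℝ)^((d:ℝ)/2) * T := by
      rw [Real.div_rpow ht0.le (by norm_num), hTdef]
      rw [div_eq_mul_inv, ← Real.rpow_neg (by norm_num : (0:ℝ) ≤ 2)]
      rw [show -(-(d:ℝ)/2) = (d:ℝ)/2 by ring]
      ring
    linarith [h1, h2.le, h2.ge]
  have hlowpow : ∀ n : ℕ, (n:ℝ) ≤ t/2 → t^n ≤ (2:ℝ)^(t/2) * (t/2)^n := by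
    intro n hle
    have h1 : (t:ℝ)^n = 2^n * (t/2)^n := by
      rw [← mul_pow]; ring_nf
    have h2 : (2:ℝ)^n ≤ (2:ℝ)^(t/2) := by
      rw [← Real.rpow_natCast 2 n]
      exact Real.rpow_le_rpow_of_exponent_le one_le_two hle
    calc (t:ℝ)^n = 2^n * (t/2)^n := h1
      _ ≤ (2:ℝ)^(t/2) * (t/2)^n := mul_le_mul_of_nonneg_right h2 (by positivity)
  -- high regime factorial bound
  have hhigh : ∀ n : ℕ, 1 ≤ n → 21*t < (n:ℝ) →
      t^n / (Nat.factorial n : ℝ) ≤ Real.exp (-(2*(n:ℝ))) := by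
    intro n hn h21
    have hn0 : (0:ℝ) < (n:ℝ) := by exact_mod_cast hn
    have hfac : (0:ℝ) < (Nat.factorial n : ℝ) := by exact_mod_cast n.factorial_pos
    have hexp3 : Real.exp 3 ≤ 21 := by
      have h : Real.exp 3 = Real.exp 1 ^ 3 := by
        rw [← Real.exp_nat_mul]; norm_num
      have he : Real.exp 1 ≤ (2.72:ℝ) := by
        linarith [Real.exp_one_lt_d9]
      have hcube : Real.exp 1 ^ 3 ≤ (2.72:ℝ)^3 :=
        pow_le_pow_left₀ (Real.exp_pos 1).le he 3
      rw [h]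
      nlinarith [hcube]
    have hten : t ≤ (n:ℝ) * Real.exp (-3) := by
      rw [Real.exp_neg, ← div_eq_mul_inv, le_div_iff₀ (Real.exp_pos 3)]
      nlinarith [ht0]
    have h1 : t^n ≤ ((n:ℝ) * Real.exp (-3))^n := pow_le_pow_left₀ ht0.le hten n
    have h2 : ((n:ℝ) * Real.exp (-3))^n = (n:ℝ)^n * Real.exp ((n:ℝ) * (-3)) := by
      rw [mul_pow, Real.exp_nat_mul]
    have h3 : (n:ℝ)^n ≤ Real.exp (n:ℝ) * (Nat.factorial n : ℝ) := by
      have := Real.pow_div_factorial_le_exp (x := (n:ℝ)) hn0.le n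
      rw [div_le_iff₀ hfac] at this
      linarith
    have h4 : t^n ≤ Real.exp (-(2*(n:ℝ))) * (Nat.factorial n : ℝ) := by
      have he : Real.exp (n:ℝ) * Real.exp ((n:ℝ) * (-3)) = Real.exp (-(2*(n:ℝ))) := by
        rw [← Real.exp_add]; ring_nf
      calc t^n ≤ ((n:ℝ) * Real.exp (-3))^n := h1
        _ = (n:ℝ)^n * Real.exp ((n:ℝ) * (-3)) := h2
        _ ≤ (Real.exp (n:ℝ) * (Nat.factorial n : ℝ)) * Real.exp ((n:ℝ) * (-3)) :=
            mul_le_mul_of_nonneg_right h3 (Real.exp_pos _).le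
        _ = (Real.exp (n:ℝ) * Real.exp ((n:ℝ) * (-3))) * (Nat.factorial n : ℝ) := by ring
        _ = Real.exp (-(2*(n:ℝ))) * (Nat.factorial n : ℝ) := by rw [he]
    rw [div_le_iff₀ hfac]
    linarith
  -- AM-GM step for the high regime
  have hamgm : ∀ n : ℕ, 1 ≤ n →
      Real.exp (-(2*(n:ℝ))) * Real.exp (-C₂*r^2/n) ≤
        Real.exp (-(n:ℝ)) * Real.exp (-(2*Real.sqrt C₂)*r) := by
    intro n hn
    have hn0 : (0:ℝ) < (n:ℝ) := by exact_mod_cast hn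
    rw [← Real.exp_add, ← Real.exp_add]
    apply Real.exp_le_exp.mpr
    have hdiv : 2*Real.sqrt C₂*r - (n:ℝ) ≤ C₂ * r^2 / n := by
      rw [le_div_iff₀ hn0]
      nlinarith [sq_nonneg ((n:ℝ) - Real.sqrt C₂ * r), Real.sq_sqrt hC₂.le]
    have hrw : -C₂*r^2/(n:ℝ) = -(C₂ * r^2 / n) := by ring
    rw [hrw]
    linarith
  have hexpn : ∀ n : ℕ, Real.exp (-(n:ℝ)) = Real.exp (-1) ^ n := by
    intro n
    rw [show -(n:ℝ) = (n:ℝ) * (-1) by ring, Real.exp_nat_mul]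
  -- constants
  set K1 : ℝ := C₁ * Real.exp C₂ * (2:ℝ)^((d:ℝ)/2) * T * E * Real.exp (-t) with hK1def
  set K2 : ℝ := C₁ * Real.exp C₂ * E * Real.exp (-t) * (2:ℝ)^(t/2) with hK2def
  set K3 : ℝ := C₁ * Real.exp (-t) * Real.exp (-(2*Real.sqrt C₂)*r) with hK3def
  have hK10 : 0 ≤ K1 := by rw [hK1def]; positivity
  have hK20 : 0 ≤ K2 := by rw [hK2def]; positivity
  have hK30 : 0 ≤ K3 := by rw [hK3def]; positivity
  clear_value K1 K2 K3
  -- the majorant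
  set F : ℕ → ℝ := fun n => (if n = 0 then Real.exp (-t) * E else 0) +
      (K1 * (t^n / (Nat.factorial n : ℝ)) +
        (K2 * ((t/2)^n / (Nat.factorial n : ℝ)) + K3 * Real.exp (-1) ^ n)) with hFdef
  have hf0nn : ∀ n : ℕ, 0 ≤ (if n = 0 then Real.exp (-t) * E else 0) := by
    intro n; split <;> positivity
  have hf1nn : ∀ n : ℕ, 0 ≤ K1 * (t^n / (Nat.factorial n : ℝ)) := by
    intro n; positivity
  have hf2nn : ∀ n : ℕ, 0 ≤ K2 * ((t/2)^n / (Nat.factorial n : ℝ)) := by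
    intro n; positivity
  have hf3nn : ∀ n : ℕ, 0 ≤ K3 * Real.exp (-1) ^ n := by
    intro n; positivity
  have hPnn : ∀ n : ℕ, 0 ≤ Real.exp (-t) * t ^ n / (Nat.factorial n : ℝ) := by
    intro n; positivity
  -- per-term bound
  have hterm : ∀ n : ℕ,
      Real.exp (-t) * t ^ n / (Nat.factorial n : ℝ) * convPow μ n y ≤ F n := by
    intro n
    rcases Nat.eq_zero_or_pos n with hn0 | hn1
    · subst hn0
      have hite : (if y = 0 then (1:ℝ) else 0) ≤ E := by
        by_cases hy : y = 0
        · have hz : znorm (0 : Fin d → ℤ) = 0 := by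
            simp [znorm]
          have : E = 1 := by
            rw [hEdef, hrdef, hy, hz]
            norm_num
          simp [hy, this]
        · simp only [hy, if_false]
          exact hE0.le
      have h1 : Real.exp (-t) * t ^ 0 / (Nat.factorial 0 : ℝ) * convPow μ 0 y ≤
          Real.exp (-t) * E := by
        simp only [convPow, pow_zero, Nat.factorial_zero, Nat.cast_one]
        calc Real.exp (-t) * 1 / 1 * (if y = 0 then (1:ℝ) else 0)
            = Real.exp (-t) * (if y = 0 then (1:ℝ) else 0) := by ring
          _ ≤ Real.exp (-t) * E := mul_le_mul_of_nonneg_left hite (Real.exp_pos _).le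
      have hF0 : F 0 = Real.exp (-t) * E +
          (K1 * (t^0 / (Nat.factorial 0 : ℝ)) +
            (K2 * ((t/2)^0 / (Nat.factorial 0 : ℝ)) + K3 * Real.exp (-1) ^ 0)) := by
        simp only [hFdef]
        norm_num
      rw [hF0]
      linarith [hf1nn 0, hf2nn 0, hf3nn 0, h1]
    · have hcb := hbound n hn1 y
      rw [← hrdef] at hcb
      have hFn : F n = (if n = 0 then Real.exp (-t) * E else 0) +
          (K1 * (t^n / (Nat.factorial n : ℝ)) +
            (K2 * ((t/2)^n / (Nat.factorial n : ℝ)) + K3 * Real.exp (-1) ^ n)) := by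
        simp only [hFdef]
      rcases lt_or_ge (21*t) ((n:ℝ)) with hhi | h21
      · -- high regime
        have hfac : (0:ℝ) < (Nat.factorial n : ℝ) := by exact_mod_cast n.factorial_pos
        have hcv : convPow μ n y ≤ C₁ * Real.exp (-C₂ * r^2 / n) := by
          calc convPow μ n y ≤ C₁ * ((n:ℝ))^(-(d:ℝ)/2) * Real.exp (-C₂ * r^2 / n) := hcb
            _ ≤ C₁ * 1 * Real.exp (-C₂ * r^2 / n) := by
                apply mul_le_mul_of_nonneg_right _ (Real.exp_pos _).le
                exact mul_le_mul_of_nonneg_left (hrpone n hn1) hC₁.le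
            _ = C₁ * Real.exp (-C₂ * r^2 / n) := by ring
        have step : Real.exp (-t) * t ^ n / (Nat.factorial n : ℝ) * convPow μ n y ≤
            K3 * Real.exp (-1) ^ n := by
          calc Real.exp (-t) * t ^ n / (Nat.factorial n : ℝ) * convPow μ n y
              ≤ Real.exp (-t) * t ^ n / (Nat.factorial n : ℝ) *
                  (C₁ * Real.exp (-C₂ * r^2 / n)) :=
                mul_le_mul_of_nonneg_left hcv (hPnn n)
            _ = (C₁ * Real.exp (-t)) *
                  ((t^n / (Nat.factorial n : ℝ)) * Real.exp (-C₂ * r^2 / n)) := by ring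
            _ ≤ (C₁ * Real.exp (-t)) *
                  (Real.exp (-(2*(n:ℝ))) * Real.exp (-C₂ * r^2 / n)) := by
                apply mul_le_mul_of_nonneg_left _ (by positivity)
                exact mul_le_mul_of_nonneg_right (hhigh n hn1 hhi) (Real.exp_pos _).le
            _ ≤ (C₁ * Real.exp (-t)) *
                  (Real.exp (-(n:ℝ)) * Real.exp (-(2*Real.sqrt C₂)*r)) := by
                apply mul_le_mul_of_nonneg_left _ (by positivity)
                have h := hamgm n hn1
                have hrw : -C₂*r^2/(n:ℝ) = -C₂ * r^2 / n := by ring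
                linarith [h]
            _ = K3 * Real.exp (-1) ^ n := by
                rw [hK3def, ← hexpn n]; ring
        rw [hFn]
        linarith [hf0nn n, hf1nn n, hf2nn n, step]
      · rcases le_or_gt (t/2) ((n:ℝ)) with hmid | hlow
        · -- middle regime
          have hcv : convPow μ n y ≤ C₁ * ((2:ℝ)^((d:ℝ)/2) * T) * (Real.exp C₂ * E) := by
            calc convPow μ n y ≤ C₁ * ((n:ℝ))^(-(d:ℝ)/2) * Real.exp (-C₂ * r^2 / n) := hcb
              _ ≤ C₁ * ((2:ℝ)^((d:ℝ)/2) * T) * (Real.exp C₂ * E) := by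
                  apply mul_le_mul
                  · exact mul_le_mul_of_nonneg_left (hrpmid n hmid) hC₁.le
                  · exact hgauss n hn1 h21
                  · exact (Real.exp_pos _).le
                  · positivity
          have step : Real.exp (-t) * t ^ n / (Nat.factorial n : ℝ) * convPow μ n y ≤
              K1 * (t^n / (Nat.factorial n : ℝ)) := by
            calc Real.exp (-t) * t ^ n / (Nat.factorial n : ℝ) * convPow μ n y
                ≤ Real.exp (-t) * t ^ n / (Nat.factorial n : ℝ) *
                    (C₁ * ((2:ℝ)^((d:ℝ)/2) * T) * (Real.exp C₂ * E)) :=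
                  mul_le_mul_of_nonneg_left hcv (hPnn n)
              _ = K1 * (t^n / (Nat.factorial n : ℝ)) := by rw [hK1def]; ring
          rw [hFn]
          linarith [hf0nn n, hf2nn n, hf3nn n, step]
        · -- low regime
          have hcv : convPow μ n y ≤ C₁ * (Real.exp C₂ * E) := by
            calc convPow μ n y ≤ C₁ * ((n:ℝ))^(-(d:ℝ)/2) * Real.exp (-C₂ * r^2 / n) := hcb
              _ ≤ C₁ * 1 * (Real.exp C₂ * E) := by
                  apply mul_le_mul
                  · exact mul_le_mul_of_nonneg_left (hrpone n hn1) hC₁.le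
                  · exact hgauss n hn1 (by linarith)
                  · exact (Real.exp_pos _).le
                  · linarith [hC₁]
              _ = C₁ * (Real.exp C₂ * E) := by ring
          have hlp := hlowpow n hlow.le
          have hfac : (0:ℝ) < (Nat.factorial n : ℝ) := by exact_mod_cast n.factorial_pos
          have step : Real.exp (-t) * t ^ n / (Nat.factorial n : ℝ) * convPow μ n y ≤
              K2 * ((t/2)^n / (Nat.factorial n : ℝ)) := by
            calc Real.exp (-t) * t ^ n / (Nat.factorial n : ℝ) * convPow μ n y
                ≤ Real.exp (-t) * t ^ n / (Nat.factorial n : ℝ) * (C₁ * (Real.exp C₂ * E)) :=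
                  mul_le_mul_of_nonneg_left hcv (hPnn n)
              _ = (C₁ * Real.exp C₂ * E * Real.exp (-t) / (Nat.factorial n : ℝ)) * t^n := by
                  ring
              _ ≤ (C₁ * Real.exp C₂ * E * Real.exp (-t) / (Nat.factorial n : ℝ)) *
                    ((2:ℝ)^(t/2) * (t/2)^n) := by
                  apply mul_le_mul_of_nonneg_left hlp (by positivity)
              _ = K2 * ((t/2)^n / (Nat.factorial n : ℝ)) := by rw [hK2def]; ring
          rw [hFn]
          linarith [hf0nn n, hf1nn n, hf3nn n, step]
  -- summability
  have hs0 : Summable (fun n : ℕ => if n = 0 then Real.exp (-t) * E else 0) :=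
    (hasSum_ite_eq (0:ℕ) (Real.exp (-t) * E)).summable
  have hs1 : Summable (fun n : ℕ => K1 * (t^n / (Nat.factorial n : ℝ))) :=
    (Real.summable_pow_div_factorial t).mul_left K1
  have hs2 : Summable (fun n : ℕ => K2 * ((t/2)^n / (Nat.factorial n : ℝ))) :=
    (Real.summable_pow_div_factorial (t/2)).mul_left K2
  have hgeom : Summable (fun n : ℕ => Real.exp (-1) ^ n) :=
    summable_geometric_of_lt_one (Real.exp_pos _).le
      (Real.exp_lt_one_iff.mpr (by norm_num))
  have hs3 : Summable (fun n : ℕ => K3 * Real.exp (-1) ^ n) := hgeom.mul_left K3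
  have hsF : Summable F := by
    rw [hFdef]
    exact hs0.add (hs1.add (hs2.add hs3))
  have hann : ∀ n : ℕ, 0 ≤ Real.exp (-t) * t ^ n / (Nat.factorial n : ℝ) * convPow μ n y :=
    fun n => mul_nonneg (hPnn n) (convPow_nonneg μ hμ0 n y)
  have hsa : Summable (fun n : ℕ =>
      Real.exp (-t) * t ^ n / (Nat.factorial n : ℝ) * convPow μ n y) :=
    Summable.of_nonneg_of_le hann hterm hsF
  -- tsum computations
  have htsum0 : ∑' n : ℕ, (if n = 0 then Real.exp (-t) * E else 0) = Real.exp (-t) * E :=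
    (hasSum_ite_eq (0:ℕ) (Real.exp (-t) * E)).tsum_eq
  have htsum1 : ∑' n : ℕ, K1 * (t^n / (Nat.factorial n : ℝ)) = K1 * Real.exp t := by
    rw [tsum_mul_left, tsum_pow_div_factorial']
  have htsum2 : ∑' n : ℕ, K2 * ((t/2)^n / (Nat.factorial n : ℝ)) = K2 * Real.exp (t/2) := by
    rw [tsum_mul_left, tsum_pow_div_factorial']
  have htsum3 : ∑' n : ℕ, K3 * Real.exp (-1) ^ n = K3 * (1 - Real.exp (-1))⁻¹ := by
    rw [tsum_mul_left, tsum_geometric_of_lt_one (Real.exp_pos _).le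
      (Real.exp_lt_one_iff.mpr (by norm_num))]
  -- bounds for each partial sum
  have hexpinv : Real.exp (-t) * Real.exp t = 1 := by rw [← Real.exp_add]; simp
  have hS1 : K1 * Real.exp t = C₁ * Real.exp C₂ * (2:ℝ)^((d:ℝ)/2) * (T * E) := by
    rw [hK1def]
    calc C₁ * Real.exp C₂ * (2:ℝ)^((d:ℝ)/2) * T * E * Real.exp (-t) * Real.exp t
        = C₁ * Real.exp C₂ * (2:ℝ)^((d:ℝ)/2) * T * E * (Real.exp (-t) * Real.exp t) := by ring
      _ = C₁ * Real.exp C₂ * (2:ℝ)^((d:ℝ)/2) * (T * E) := by rw [hexpinv]; ring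
  have hS2 : K2 * Real.exp (t/2) ≤ C₁ * Real.exp C₂ * M * (T * E) := by
    rw [hK2def]
    have h1 : Real.exp (-t) * (2:ℝ)^(t/2) * Real.exp (t/2) ≤ M * T :=
      hCher.trans hF1
    calc C₁ * Real.exp C₂ * E * Real.exp (-t) * (2:ℝ)^(t/2) * Real.exp (t/2)
        = (C₁ * Real.exp C₂ * E) * (Real.exp (-t) * (2:ℝ)^(t/2) * Real.exp (t/2)) := by ring
      _ ≤ (C₁ * Real.exp C₂ * E) * (M * T) := by
          apply mul_le_mul_of_nonneg_left h1 (by positivity)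
      _ = C₁ * Real.exp C₂ * M * (T * E) := by ring
  have hS3 : K3 * (1 - Real.exp (-1))⁻¹ ≤ 2 * C₁ * M * (T * E) := by
    have he2 : Real.exp (-1) ≤ 1/2 := by
      have h2e : (2:ℝ) ≤ Real.exp 1 := by
        linarith [Real.add_one_le_exp 1]
      have hmul : Real.exp (-1) * Real.exp 1 = 1 := by rw [← Real.exp_add]; simp
      nlinarith [Real.exp_pos (-1)]
    have hinv : (1 - Real.exp (-1))⁻¹ ≤ 2 := by
      have h0 : (0:ℝ) < 1 - Real.exp (-1) := by linarith [Real.exp_pos (-1)]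
      have hmul : (1 - Real.exp (-1)) * (1 - Real.exp (-1))⁻¹ = 1 :=
        mul_inv_cancel₀ h0.ne'
      nlinarith [inv_pos.mpr h0]
    have hK3b : K3 ≤ C₁ * (M * T) * E := by
      rw [hK3def]
      exact mul_le_mul (mul_le_mul_of_nonneg_left hexptMT hC₁.le) hF4
        (Real.exp_pos _).le (by positivity)
    have hstepA : K3 * (1 - Real.exp (-1))⁻¹ ≤ K3 * 2 :=
      mul_le_mul_of_nonneg_left hinv hK30
    have hstepB : K3 * 2 ≤ (C₁ * (M * T) * E) * 2 :=
      mul_le_mul_of_nonneg_right hK3b (by norm_num)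
    have hstepC : (C₁ * (M * T) * E) * 2 = 2 * C₁ * M * (T * E) := by ring
    linarith
  have hS0 : Real.exp (-t) * E ≤ M * (T * E) := by
    calc Real.exp (-t) * E ≤ (M * T) * E := mul_le_mul_of_nonneg_right hexptMT hE0.le
      _ = M * (T * E) := by ring
  -- conclude
  have hq : qKer μ t y ≤ ∑' n, F n := by
    rw [qKer]
    exact Summable.tsum_le_tsum hterm hsa hsF
  have hsplit : ∑' n, F n = Real.exp (-t) * E +
      (K1 * Real.exp t + (K2 * Real.exp (t/2) + K3 * (1 - Real.exp (-1))⁻¹)) := by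
    rw [hFdef]
    rw [Summable.tsum_add hs0 (hs1.add (hs2.add hs3)), Summable.tsum_add hs1 (hs2.add hs3), Summable.tsum_add hs2 hs3]
    rw [htsum0, htsum1, htsum2, htsum3]
  calc qKer μ t y ≤ Real.exp (-t) * E +
      (K1 * Real.exp t + (K2 * Real.exp (t/2) + K3 * (1 - Real.exp (-1))⁻¹)) := by
        rw [← hsplit]; exact hq
    _ ≤ M * (T * E) + (C₁ * Real.exp C₂ * (2:ℝ)^((d:ℝ)/2) * (T * E) +
        (C₁ * Real.exp C₂ * M * (T * E) + 2 * C₁ * M * (T * E))) := by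
        linarith [hS0, hS1.le, hS2, hS3]
    _ = (M + C₁ * Real.exp C₂ * (2:ℝ)^((d:ℝ)/2) + C₁ * Real.exp C₂ * M + 2 * C₁ * M) *
        T * E := by ring
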